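/- Let Ψ be a normalized tripartite pure state in ℂ^{d_A}⊗ℂ^{d_B}⊗ℂ^{d_C} (all dimensions finite and positive), let ρ_BC be its reduced density matrix on the last two factors, and let I₅(Ψ) = Tr[(ρ_BC^Γ)³] be its third-order negativity. Then I₅(Ψ) = 1 if and only if Ψ is fully product, i.e. there exist vectors f : Fin d_A → ℂ, g : Fin d_B → ℂ, h : Fin d_C → ℂ with Ψ(a,b,c) = f(a)·g(b)·h(c) for all a, b, c. -/

import Mathlib

open scoped BigOperators
open Matrix

noncomputable section

/-- Reduced density matrix on the last two factors of a tripartite pure state. -/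
def rhoBC (dA dB dC : ℕ) (Ψ : Fin dA × Fin dB × Fin dC → ℂ) :
    Matrix (Fin dB × Fin dC) (Fin dB × Fin dC) ℂ :=
  fun p q => ∑ a : Fin dA, Ψ (a, p.1, p.2) * (starRingEnd ℂ) (Ψ (a, q.1, q.2))

/-- Partial transpose over the second tensor factor. -/
def ptranspose {d d' : ℕ} (M : Matrix (Fin d × Fin d') (Fin d × Fin d') ℂ) :
    Matrix (Fin d × Fin d') (Fin d × Fin d') ℂ :=
  fun p q => M (p.1, q.2) (q.1, p.2)

/-- Third-order negativity of a tripartite pure state. -/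
def I5 (dA dB dC : ℕ) (Ψ : Fin dA × Fin dB × Fin dC → ℂ) : ℝ :=
  ((ptranspose (rhoBC dA dB dC Ψ)) ^ 3).trace.re

namespace I5Aux

local notation "conj'" => (starRingEnd ℂ)

/- ### sum manipulation helpers -/

lemma sum2 {ι κ : Type*} [Fintype ι] [Fintype κ] (f : ι → ℂ) (g : κ → ℂ) :
    (∑ i, f i) * (∑ j, g j) = ∑ i, ∑ j, f i * g j := Fintype.sum_mul_sum f g

lemma sum3 {R : Type*} [CommSemiring R] {ι κ μ : Type*} [Fintype ι] [Fintype κ] [Fintype μ]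
    (f : ι → R) (g : κ → R) (h : μ → R) :
    (∑ i, f i) * (∑ j, g j) * (∑ k, h k) = ∑ k, ∑ j, ∑ i, f i * g j * h k := by
  simp only [Finset.sum_mul, Finset.mul_sum]

/- ### generic trace expansions -/

lemma trace_mul_expand {n : Type*} [Fintype n] (A B : Matrix n n ℂ) :
    (A * B).trace = ∑ p, ∑ q, A p q * B q p := by
  simp [Matrix.trace, Matrix.diag, Matrix.mul_apply]

lemma trace_sq_expand {n : Type*} [Fintype n] [DecidableEq n] (M : Matrix n n ℂ) :
    (M ^ 2).trace = ∑ p, ∑ q, M p q * M q p := by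
  rw [pow_two, trace_mul_expand]

lemma trace_cube_expand {n : Type*} [Fintype n] [DecidableEq n] (M : Matrix n n ℂ) :
    (M ^ 3).trace = ∑ p, ∑ q, ∑ r, M p q * M q r * M r p := by
  have h3 : M ^ 3 = M * M * M := by rw [pow_succ, pow_two]
  simp only [h3, Matrix.trace, Matrix.diag, Matrix.mul_apply, Finset.sum_mul]
  exact Finset.sum_congr rfl fun p _ => Finset.sum_comm

/- ### Cauchy–Schwarz chain : Re tr M³ ≤ t·√t where t = Re tr M², for Hermitian M -/

lemma chain {n : Type*} [Fintype n] [DecidableEq n] (M : Matrix n n ℂ)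
    (h : ∀ p q, conj' (M p q) = M q p) :
    ((M ^ 3).trace).re ≤ ((M ^ 2).trace).re * Real.sqrt ((M ^ 2).trace).re := by
  set t : ℝ := ∑ z : n × n, ‖M z.1 z.2‖ ^ 2 with ht
  have ht0 : 0 ≤ t := Finset.sum_nonneg fun _ _ => by positivity
  have htr2 : (M ^ 2).trace = (t : ℝ) := by
    rw [trace_sq_expand]
    have hterm : ∀ p q : n, M p q * M q p = ((‖M p q‖ ^ 2 : ℝ) : ℂ) := by
      intro p q
      rw [← h p q, Complex.mul_conj, Complex.normSq_eq_norm_sq]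
    simp only [hterm, ht]
    rw [Fintype.sum_prod_type]
    push_cast
    rfl
  have hre2 : ((M ^ 2).trace).re = t := by rw [htr2, Complex.ofReal_re]
  set x : EuclideanSpace ℂ (n × n) := WithLp.toLp 2 (fun z : n × n => M z.1 z.2) with hxdef
  set y : EuclideanSpace ℂ (n × n) := WithLp.toLp 2 (fun z : n × n => (M ^ 2) z.1 z.2) with hydef
  have hinner : (inner ℂ x y : ℂ) = (M ^ 3).trace := by
    have h3 : M ^ 3 = M ^ 2 * M := by rw [pow_succ]
    rw [h3, trace_mul_expand, PiLp.inner_apply]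
    rw [Fintype.sum_prod_type]
    refine Finset.sum_congr rfl fun p _ => Finset.sum_congr rfl fun q _ => ?_
    simp only [hxdef, hydef, RCLike.inner_apply, starRingEnd_apply]
    rw [← starRingEnd_apply, h p q]
  have hnx : ‖x‖ = Real.sqrt t := by
    rw [EuclideanSpace.norm_eq, ht]
  have hny : ‖y‖ ≤ t := by
    have hy2 : ‖y‖ ^ 2 ≤ t ^ 2 := by
      have hnormeq : ‖y‖ ^ 2 = ∑ z : n × n, ‖y z‖ ^ 2 := by
        rw [EuclideanSpace.norm_eq, Real.sq_sqrt]
        exact Finset.sum_nonneg fun _ _ => by positivity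
      rw [hnormeq]
      have hpt : ∀ z : n × n, ‖y z‖ ^ 2 ≤
          (∑ k, ‖M z.1 k‖ ^ 2) * (∑ k, ‖M k z.2‖ ^ 2) := by
        intro z
        have h1 : ‖y z‖ ≤ ∑ k, ‖M z.1 k‖ * ‖M k z.2‖ := by
          simp only [hydef, pow_two, Matrix.mul_apply]
          refine le_trans (norm_sum_le _ _) ?_
          exact Finset.sum_le_sum fun k _ => by rw [norm_mul]
        have h2 : (∑ k, ‖M z.1 k‖ * ‖M k z.2‖) ^ 2 ≤
            (∑ k, ‖M z.1 k‖ ^ 2) * (∑ k, ‖M k z.2‖ ^ 2) :=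
          Finset.sum_mul_sq_le_sq_mul_sq _ _ _
        calc ‖y z‖ ^ 2 ≤ (∑ k, ‖M z.1 k‖ * ‖M k z.2‖) ^ 2 :=
              pow_le_pow_left₀ (norm_nonneg _) h1 2
          _ ≤ _ := h2
      refine le_trans (Finset.sum_le_sum fun z _ => hpt z) ?_
      have hfact : ∑ z : n × n, (∑ k, ‖M z.1 k‖ ^ 2) * (∑ k, ‖M k z.2‖ ^ 2)
          = (∑ p, ∑ k, ‖M p k‖ ^ 2) * (∑ q, ∑ k, ‖M k q‖ ^ 2) := by
        rw [Fintype.sum_prod_type, Finset.sum_mul]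
        exact Finset.sum_congr rfl fun p _ => by rw [Finset.mul_sum]
      rw [hfact]
      have e1 : ∑ p, ∑ k, ‖M p k‖ ^ 2 = t := by rw [ht, Fintype.sum_prod_type]
      have e2 : ∑ q, ∑ k, ‖M k q‖ ^ 2 = t := by
        rw [ht, Fintype.sum_prod_type]; exact Finset.sum_comm
      rw [e1, e2, pow_two]
    nlinarith [norm_nonneg y]
  calc ((M ^ 3).trace).re = (inner ℂ x y : ℂ).re := by rw [hinner]
    _ ≤ ‖(inner ℂ x y : ℂ)‖ := by
        exact Complex.re_le_norm _
    _ ≤ ‖x‖ * ‖y‖ := norm_inner_le_norm x y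
    _ ≤ Real.sqrt t * t := by
        rw [hnx]
        exact mul_le_mul_of_nonneg_left hny (Real.sqrt_nonneg t)
    _ = ((M ^ 2).trace).re * Real.sqrt ((M ^ 2).trace).re := by
        rw [hre2, mul_comm]

/- ### Gram / Cauchy–Schwarz lemmas for families of vectors -/

lemma gram_le {ι κ : Type*} [Fintype ι] [Fintype κ] (v : ι → EuclideanSpace ℂ κ) :
    ∑ x, ∑ x', ‖(inner ℂ (v x) (v x') : ℂ)‖ ^ 2 ≤ (∑ x, ‖v x‖ ^ 2) ^ 2 := by
  have hpt : ∀ x x' : ι, ‖(inner ℂ (v x) (v x') : ℂ)‖ ^ 2 ≤ ‖v x‖ ^ 2 * ‖v x'‖ ^ 2 := by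
    intro x x'
    have h := norm_inner_le_norm (𝕜 := ℂ) (v x) (v x')
    calc ‖(inner ℂ (v x) (v x') : ℂ)‖ ^ 2 ≤ (‖v x‖ * ‖v x'‖) ^ 2 :=
        pow_le_pow_left₀ (norm_nonneg _) h 2
      _ = ‖v x‖ ^ 2 * ‖v x'‖ ^ 2 := by ring
  calc ∑ x, ∑ x', ‖(inner ℂ (v x) (v x') : ℂ)‖ ^ 2
      ≤ ∑ x, ∑ x', ‖v x‖ ^ 2 * ‖v x'‖ ^ 2 :=
        Finset.sum_le_sum fun x _ => Finset.sum_le_sum fun x' _ => hpt x x'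
    _ = (∑ x, ‖v x‖ ^ 2) ^ 2 := by
        rw [pow_two, Finset.sum_mul]
        exact Finset.sum_congr rfl fun x _ => by rw [Finset.mul_sum]

lemma gram_eq {ι κ : Type*} [Fintype ι] [Fintype κ] [Nonempty ι]
    (v : ι → EuclideanSpace ℂ κ)
    (hnorm : ∑ x, ‖v x‖ ^ 2 = 1)
    (heq : ∑ x, ∑ x', ‖(inner ℂ (v x) (v x') : ℂ)‖ ^ 2 = 1) :
    ∃ (φ : ι → ℂ) (w : κ → ℂ), ∀ x y, v x y = φ x * w y := by
  have hptle : ∀ z : ι × ι, ‖(inner ℂ (v z.1) (v z.2) : ℂ)‖ ^ 2 ≤ (‖v z.1‖ * ‖v z.2‖) ^ 2 := by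
    intro z
    exact pow_le_pow_left₀ (norm_nonneg _) (norm_inner_le_norm (𝕜 := ℂ) _ _) 2
  have hsums : ∑ z : ι × ι, ‖(inner ℂ (v z.1) (v z.2) : ℂ)‖ ^ 2
      = ∑ z : ι × ι, (‖v z.1‖ * ‖v z.2‖) ^ 2 := by
    have h1 : ∑ z : ι × ι, ‖(inner ℂ (v z.1) (v z.2) : ℂ)‖ ^ 2 = 1 := by
      rw [Fintype.sum_prod_type]; exact heq
    have h2 : ∑ z : ι × ι, (‖v z.1‖ * ‖v z.2‖) ^ 2 = 1 := by
      rw [Fintype.sum_prod_type]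
      have hx : ∀ x : ι, ∑ x' : ι, (‖v x‖ * ‖v x'‖) ^ 2 = ‖v x‖ ^ 2 * ∑ x' : ι, ‖v x'‖ ^ 2 := by
        intro x; rw [Finset.mul_sum]; exact Finset.sum_congr rfl fun x' _ => by ring
      simp only [hx, hnorm, mul_one]
    rw [h1, h2]
  have hterm : ∀ z : ι × ι, ‖(inner ℂ (v z.1) (v z.2) : ℂ)‖ ^ 2 = (‖v z.1‖ * ‖v z.2‖) ^ 2 :=
    fun z => (Finset.sum_eq_sum_iff_of_le (fun i _ => hptle i)).mp hsums z (Finset.mem_univ z)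
  have hterm' : ∀ x x' : ι, ‖(inner ℂ (v x) (v x') : ℂ)‖ = ‖v x‖ * ‖v x'‖ := by
    intro x x'
    have h := hterm (x, x')
    have h1 : (0:ℝ) ≤ ‖(inner ℂ (v x) (v x') : ℂ)‖ := norm_nonneg _
    have h2 : (0:ℝ) ≤ ‖v x‖ * ‖v x'‖ := by positivity
    nlinarith
  have hex : ∃ x0 : ι, v x0 ≠ 0 := by
    by_contra hc
    push_neg at hc
    rw [Finset.sum_eq_zero (fun x _ => by rw [hc x, norm_zero]; norm_num)] at hnorm
    norm_num at hnorm
  obtain ⟨x0, hx0⟩ := hex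
  have hall : ∀ x : ι, ∃ r : ℂ, v x = r • v x0 := by
    intro x
    by_cases hx : v x = 0
    · exact ⟨0, by rw [hx, zero_smul]⟩
    · obtain ⟨r, _, hr⟩ := (norm_inner_eq_norm_iff (𝕜 := ℂ) hx0 hx).mp (hterm' x0 x)
      exact ⟨r, hr⟩
  choose φ hφ using hall
  refine ⟨φ, fun y => v x0 y, fun x y => ?_⟩
  rw [hφ x]
  rfl

/- ### the reduced matrix and its Gram structure -/

def GramA (dA dB dC : ℕ) (Ψ : Fin dA × Fin dB × Fin dC → ℂ) (a a' : Fin dA) : ℂ :=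
  ∑ y : Fin dB × Fin dC, Ψ (a, y.1, y.2) * conj' (Ψ (a', y.1, y.2))

lemma Mherm {dA dB dC : ℕ} (Ψ : Fin dA × Fin dB × Fin dC → ℂ) :
    ∀ p q, conj' ((ptranspose (rhoBC dA dB dC Ψ)) p q) = (ptranspose (rhoBC dA dB dC Ψ)) q p := by
  intro p q
  simp only [ptranspose, rhoBC, _root_.map_sum]
  exact Finset.sum_congr rfl fun a _ => by
    rw [_root_.map_mul, Complex.conj_conj, mul_comm]

lemma trM2 {dA dB dC : ℕ} (Ψ : Fin dA × Fin dB × Fin dC → ℂ) :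
    ((ptranspose (rhoBC dA dB dC Ψ)) ^ 2).trace
      = ∑ w : Fin dA × Fin dA, GramA dA dB dC Ψ w.1 w.2 * conj' (GramA dA dB dC Ψ w.1 w.2) := by
  rw [trace_sq_expand]
  have hM : ∀ p q : Fin dB × Fin dC, (ptranspose (rhoBC dA dB dC Ψ)) p q
      = ∑ a, Ψ (a, p.1, q.2) * conj' (Ψ (a, q.1, p.2)) := fun p q => rfl
  simp only [hM, sum2]
  have hR : ∀ w : Fin dA × Fin dA, GramA dA dB dC Ψ w.1 w.2 * conj' (GramA dA dB dC Ψ w.1 w.2)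
      = ∑ y : Fin dB × Fin dC, ∑ y' : Fin dB × Fin dC,
          (Ψ (w.1, y.1, y.2) * conj' (Ψ (w.2, y.1, y.2))) *
            (conj' (Ψ (w.1, y'.1, y'.2)) * Ψ (w.2, y'.1, y'.2)) := by
    intro w
    rw [GramA, _root_.map_sum, sum2]
    refine Finset.sum_congr rfl fun y _ => Finset.sum_congr rfl fun y' _ => by
      rw [_root_.map_mul, Complex.conj_conj]
  simp only [hR]
  rw [show (∑ w : Fin dA × Fin dA, ∑ y : Fin dB × Fin dC, ∑ y' : Fin dB × Fin dC,
        (Ψ (w.1, y.1, y.2) * conj' (Ψ (w.2, y.1, y.2))) *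
          (conj' (Ψ (w.1, y'.1, y'.2)) * Ψ (w.2, y'.1, y'.2)))
      = ∑ z : (Fin dA × Fin dA) × (Fin dB × Fin dC) × (Fin dB × Fin dC),
        (Ψ (z.1.1, z.2.1.1, z.2.1.2) * conj' (Ψ (z.1.2, z.2.1.1, z.2.1.2))) *
          (conj' (Ψ (z.1.1, z.2.2.1, z.2.2.2)) * Ψ (z.1.2, z.2.2.1, z.2.2.2)) from by
    simp only [Fintype.sum_prod_type]]
  rw [show (∑ p : Fin dB × Fin dC, ∑ q : Fin dB × Fin dC, ∑ a1 : Fin dA, ∑ a2 : Fin dA,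
        (Ψ (a1, p.1, q.2) * conj' (Ψ (a1, q.1, p.2))) * (Ψ (a2, q.1, p.2) * conj' (Ψ (a2, p.1, q.2))))
      = ∑ z : (Fin dB × Fin dC) × (Fin dB × Fin dC) × Fin dA × Fin dA,
        (Ψ (z.2.2.1, z.1.1, z.2.1.2) * conj' (Ψ (z.2.2.1, z.2.1.1, z.1.2))) *
          (Ψ (z.2.2.2, z.2.1.1, z.1.2) * conj' (Ψ (z.2.2.2, z.1.1, z.2.1.2))) from by
    simp only [Fintype.sum_prod_type]]
  refine Fintype.sum_bijective
    (fun z : (Fin dB × Fin dC) × (Fin dB × Fin dC) × Fin dA × Fin dA =>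
      (((z.2.2.1, z.2.2.2), ((z.1.1, z.2.1.2), (z.2.1.1, z.1.2))) :
        (Fin dA × Fin dA) × (Fin dB × Fin dC) × (Fin dB × Fin dC)))
    (Equiv.mk
      (fun z : (Fin dB × Fin dC) × (Fin dB × Fin dC) × Fin dA × Fin dA =>
        (((z.2.2.1, z.2.2.2), ((z.1.1, z.2.1.2), (z.2.1.1, z.1.2))) :
          (Fin dA × Fin dA) × (Fin dB × Fin dC) × (Fin dB × Fin dC)))
      (fun z => ((z.2.1.1, z.2.2.2), (z.2.2.1, z.2.1.2), (z.1.1, z.1.2)))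
      (fun _ => rfl) (fun _ => rfl)).bijective
    _ _ (fun z => by ring)

/- ### expansion of the cubed trace and the A ↔ B symmetry -/

abbrev Z3 (dA dB dC : ℕ) :=
  (Fin dB × Fin dC) × (Fin dB × Fin dC) × (Fin dB × Fin dC) × Fin dA × Fin dA × Fin dA

def term3 (dA dB dC : ℕ) (Ψ : Fin dA × Fin dB × Fin dC → ℂ) (z : Z3 dA dB dC) : ℂ :=
  Ψ (z.2.2.2.2.2, z.1.1, z.2.1.2) * conj' (Ψ (z.2.2.2.2.2, z.2.1.1, z.1.2)) *
    (Ψ (z.2.2.2.2.1, z.2.1.1, z.2.2.1.2) * conj' (Ψ (z.2.2.2.2.1, z.2.2.1.1, z.2.1.2))) *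
    (Ψ (z.2.2.2.1, z.2.2.1.1, z.1.2) * conj' (Ψ (z.2.2.2.1, z.1.1, z.2.2.1.2)))

lemma S_expand (dA dB dC : ℕ) (Ψ : Fin dA × Fin dB × Fin dC → ℂ) :
    ((ptranspose (rhoBC dA dB dC Ψ)) ^ 3).trace = ∑ z : Z3 dA dB dC, term3 dA dB dC Ψ z := by
  rw [trace_cube_expand]
  have hM : ∀ p q : Fin dB × Fin dC, (ptranspose (rhoBC dA dB dC Ψ)) p q
      = ∑ a, Ψ (a, p.1, q.2) * conj' (Ψ (a, q.1, p.2)) := fun p q => rfl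
  simp only [hM, sum3]
  simp only [term3, Fintype.sum_prod_type]

def swapState (dA dB dC : ℕ) (Ψ : Fin dA × Fin dB × Fin dC → ℂ) :
    Fin dB × Fin dA × Fin dC → ℂ := fun v => Ψ (v.2.1, v.1, v.2.2)

lemma S_swap (dA dB dC : ℕ) (Ψ : Fin dA × Fin dB × Fin dC → ℂ) :
    ((ptranspose (rhoBC dB dA dC (swapState dA dB dC Ψ))) ^ 3).trace
      = conj' (((ptranspose (rhoBC dA dB dC Ψ)) ^ 3).trace) := by
  rw [S_expand, S_expand, _root_.map_sum]
  refine (Fintype.sum_bijective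
    (fun z : Z3 dA dB dC =>
      (((z.2.2.2.2.2, z.2.2.1.2), (z.2.2.2.2.1, z.1.2), (z.2.2.2.1, z.2.1.2),
        z.1.1, z.2.2.1.1, z.2.1.1) : Z3 dB dA dC))
    (Equiv.mk
      (fun z : Z3 dA dB dC =>
        (((z.2.2.2.2.2, z.2.2.1.2), (z.2.2.2.2.1, z.1.2), (z.2.2.2.1, z.2.1.2),
          z.1.1, z.2.2.1.1, z.2.1.1) : Z3 dB dA dC))
      (fun z' : Z3 dB dA dC =>
        (((z'.2.2.2.1, z'.2.1.2), (z'.2.2.2.2.2, z'.2.2.1.2), (z'.2.2.2.2.1, z'.1.2),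
          z'.2.2.1.1, z'.2.1.1, z'.1.1) : Z3 dA dB dC))
      (fun _ => rfl) (fun _ => rfl)).bijective
    (fun z => conj' (term3 dA dB dC Ψ z))
    (fun z' => term3 dB dA dC (swapState dA dB dC Ψ) z')
    (fun z => by
      simp only [term3, swapState, _root_.map_mul, Complex.conj_conj]
      ring)).symm

lemma I5_swap (dA dB dC : ℕ) (Ψ : Fin dA × Fin dB × Fin dC → ℂ) :
    I5 dB dA dC (swapState dA dB dC Ψ) = I5 dA dB dC Ψ := by
  show ((ptranspose (rhoBC dB dA dC (swapState dA dB dC Ψ))) ^ 3).trace.re = _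
  rw [S_swap]
  exact Complex.conj_re _

/- ### main splitting lemma : I5 = 1 forces a product across the A | BC cut -/

lemma split (dA dB dC : ℕ) (hdA : 0 < dA)
    (Ψ : Fin dA × Fin dB × Fin dC → ℂ)
    (hΨ : ∑ v : Fin dA × Fin dB × Fin dC, ‖Ψ v‖ ^ 2 = 1)
    (h1 : I5 dA dB dC Ψ = 1) :
    ∃ (f : Fin dA → ℂ) (w : Fin dB × Fin dC → ℂ),
      ∀ (a : Fin dA) (y : Fin dB × Fin dC), Ψ (a, y.1, y.2) = f a * w y := by
  haveI : Nonempty (Fin dA) := ⟨⟨0, hdA⟩⟩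
  set M := ptranspose (rhoBC dA dB dC Ψ) with hMdef
  set v : Fin dA → EuclideanSpace ℂ (Fin dB × Fin dC) := fun a => WithLp.toLp 2 (fun y : Fin dB × Fin dC => Ψ (a, y.1, y.2)) with hv
  have hnorm : ∑ a, ‖v a‖ ^ 2 = 1 := by
    have hna : ∀ a, ‖v a‖ ^ 2 = ∑ y : Fin dB × Fin dC, ‖Ψ (a, y.1, y.2)‖ ^ 2 := by
      intro a
      rw [EuclideanSpace.norm_eq, Real.sq_sqrt (Finset.sum_nonneg fun _ _ => by positivity)]
    simp only [hna]
    rw [← hΨ, Fintype.sum_prod_type]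
  have hinner : ∀ a a', (inner ℂ (v a) (v a') : ℂ) = conj' (GramA dA dB dC Ψ a a') := by
    intro a a'
    rw [PiLp.inner_apply, GramA, _root_.map_sum]
    refine Finset.sum_congr rfl fun y _ => ?_
    rw [_root_.map_mul, Complex.conj_conj]
    simp only [RCLike.inner_apply, starRingEnd_apply, hv]
    exact mul_comm _ _
  have htA : ((M ^ 2).trace).re = ∑ a, ∑ a', ‖(inner ℂ (v a) (v a') : ℂ)‖ ^ 2 := by
    rw [hMdef, trM2]
    have hterm : ∀ w : Fin dA × Fin dA,
        GramA dA dB dC Ψ w.1 w.2 * conj' (GramA dA dB dC Ψ w.1 w.2)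
        = ((‖(inner ℂ (v w.1) (v w.2) : ℂ)‖ ^ 2 : ℝ) : ℂ) := by
      intro w
      have hnG : ‖(inner ℂ (v w.1) (v w.2) : ℂ)‖ = ‖GramA dA dB dC Ψ w.1 w.2‖ := by
        rw [hinner]; exact RCLike.norm_conj _
      rw [hnG, Complex.mul_conj, Complex.normSq_eq_norm_sq]
    simp only [hterm]
    rw [show (∑ w : Fin dA × Fin dA, ((‖(inner ℂ (v w.1) (v w.2) : ℂ)‖ ^ 2 : ℝ) : ℂ))
        = (((∑ w : Fin dA × Fin dA, ‖(inner ℂ (v w.1) (v w.2) : ℂ)‖ ^ 2 : ℝ)) : ℂ) from by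
      push_cast; rfl]
    rw [Complex.ofReal_re, Fintype.sum_prod_type]
  have htle : ((M ^ 2).trace).re ≤ 1 := by
    rw [htA]
    calc ∑ a, ∑ a', ‖(inner ℂ (v a) (v a') : ℂ)‖ ^ 2 ≤ (∑ a, ‖v a‖ ^ 2) ^ 2 := gram_le v
      _ = 1 := by rw [hnorm]; norm_num
  have ht0 : 0 ≤ ((M ^ 2).trace).re := by
    rw [htA]
    exact Finset.sum_nonneg fun _ _ => Finset.sum_nonneg fun _ _ => by positivity
  have h3re : ((M ^ 3).trace).re = 1 := h1
  have hchain := chain M (Mherm Ψ)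
  have hteq : ((M ^ 2).trace).re = 1 := by
    set t := ((M ^ 2).trace).re with htdef
    have h2 : (1:ℝ) ≤ t * Real.sqrt t := by rw [← h3re]; exact hchain
    have hs : Real.sqrt t ≤ 1 := Real.sqrt_le_one.mpr htle
    have h4 : t * Real.sqrt t ≤ t := mul_le_of_le_one_right ht0 hs
    linarith
  have hgram : ∑ a, ∑ a', ‖(inner ℂ (v a) (v a') : ℂ)‖ ^ 2 = 1 := by rw [← htA, hteq]
  obtain ⟨φ, w, hw⟩ := gram_eq v hnorm hgram
  exact ⟨φ, w, fun a y => hw a y⟩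

end I5Aux

open I5Aux in
theorem I5_eq_one_iff_fully_product
    (dA dB dC : ℕ) (hdA : 0 < dA) (hdB : 0 < dB) (hdC : 0 < dC)
    (Ψ : Fin dA × Fin dB × Fin dC → ℂ)
    (hΨ : ∑ v : Fin dA × Fin dB × Fin dC, ‖Ψ v‖ ^ 2 = 1) :
    I5 dA dB dC Ψ = 1 ↔
      ∃ (f : Fin dA → ℂ) (g : Fin dB → ℂ) (h : Fin dC → ℂ),
        ∀ a b c, Ψ (a, b, c) = f a * g b * h c := by
  constructor
  · intro h1
    obtain ⟨f, w, hfw⟩ := split dA dB dC hdA Ψ hΨ h1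
    -- apply the same argument to the state with A and B swapped
    have hΨ' : ∑ v : Fin dB × Fin dA × Fin dC, ‖swapState dA dB dC Ψ v‖ ^ 2 = 1 := by
      rw [← hΨ]
      exact Fintype.sum_bijective
        (fun v : Fin dB × Fin dA × Fin dC => ((v.2.1, v.1, v.2.2) : Fin dA × Fin dB × Fin dC))
        (Equiv.mk
          (fun v : Fin dB × Fin dA × Fin dC => ((v.2.1, v.1, v.2.2) : Fin dA × Fin dB × Fin dC))
          (fun v => (v.2.1, v.1, v.2.2)) (fun _ => rfl) (fun _ => rfl)).bijective
        _ _ (fun v => rfl)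
    have h1' : I5 dB dA dC (swapState dA dB dC Ψ) = 1 := by rw [I5_swap]; exact h1
    obtain ⟨g, u, hgu⟩ := split dB dA dC hdB (swapState dA dB dC Ψ) hΨ' h1'
    -- a point where Ψ is nonzero
    have hex : ∃ t : Fin dA × Fin dB × Fin dC, Ψ t ≠ 0 := by
      by_contra hc
      push_neg at hc
      rw [Finset.sum_eq_zero (fun t _ => by rw [hc t, norm_zero]; norm_num)] at hΨ
      norm_num at hΨ
    obtain ⟨⟨a0, b0, c0⟩, hv0⟩ := hex
    have hf0 : f a0 ≠ 0 := by
      intro hz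
      apply hv0
      have := hfw a0 (b0, c0)
      rw [this, hz, zero_mul]
    refine ⟨f, g, fun c => (f a0)⁻¹ * u (a0, c), fun a b c => ?_⟩
    have e1 : Ψ (a, b, c) = f a * w (b, c) := hfw a (b, c)
    have e2 : Ψ (a0, b, c) = f a0 * w (b, c) := hfw a0 (b, c)
    have e3 : Ψ (a0, b, c) = g b * u (a0, c) := hgu b (a0, c)
    have e4 : w (b, c) = (f a0)⁻¹ * (g b * u (a0, c)) := by
      rw [← e3, e2, inv_mul_cancel_left₀ hf0]
    rw [e1, e4]
    ring
  · rintro ⟨f, g, h, hp⟩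
    show ((ptranspose (rhoBC dA dB dC Ψ)) ^ 3).trace.re = 1
    set F : ℂ := ∑ a, f a * (starRingEnd ℂ) (f a) with hF
    set G : ℂ := ∑ b, g b * (starRingEnd ℂ) (g b) with hG
    set H : ℂ := ∑ c, h c * (starRingEnd ℂ) (h c) with hH
    set A : Fin dB × Fin dC → ℂ :=
      fun s => (g s.1 * (starRingEnd ℂ) (g s.1)) * (h s.2 * (starRingEnd ℂ) (h s.2)) with hA
    have hM : ∀ p q : Fin dB × Fin dC, (ptranspose (rhoBC dA dB dC Ψ)) p q
        = ((g p.1 * (starRingEnd ℂ) (h p.2)) * (starRingEnd ℂ) (g q.1 * (starRingEnd ℂ) (h q.2))) * F := by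
      intro p q
      show (∑ a, Ψ (a, p.1, q.2) * (starRingEnd ℂ) (Ψ (a, q.1, p.2))) = _
      rw [hF, Finset.mul_sum]
      refine Finset.sum_congr rfl fun a _ => ?_
      rw [hp, hp]
      simp only [_root_.map_mul, Complex.conj_conj]
      ring
    rw [trace_cube_expand]
    have key : ∑ p, ∑ q, ∑ r, (ptranspose (rhoBC dA dB dC Ψ)) p q *
          (ptranspose (rhoBC dA dB dC Ψ)) q r * (ptranspose (rhoBC dA dB dC Ψ)) r p
        = (∑ s, A s * F) * (∑ s, A s * F) * (∑ s, A s * F) := by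
      rw [sum3]
      refine Finset.sum_congr rfl fun p _ => Finset.sum_congr rfl fun q _ =>
        Finset.sum_congr rfl fun r _ => ?_
      rw [hM, hM, hM]
      simp only [hA, _root_.map_mul, Complex.conj_conj]
      ring
    rw [key]
    have hAF : (∑ s : Fin dB × Fin dC, A s * F) = G * H * F := by
      rw [← Finset.sum_mul]
      congr 1
      rw [hG, hH, sum2, Fintype.sum_prod_type]
    rw [hAF]
    -- now use normalization
    have hcastF : F = ((∑ a, ‖f a‖ ^ 2 : ℝ) : ℂ) := by
      rw [hF]
      simp only [Complex.mul_conj, Complex.normSq_eq_norm_sq]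
      push_cast
      rfl
    have hcastG : G = ((∑ b, ‖g b‖ ^ 2 : ℝ) : ℂ) := by
      rw [hG]
      simp only [Complex.mul_conj, Complex.normSq_eq_norm_sq]
      push_cast
      rfl
    have hcastH : H = ((∑ c, ‖h c‖ ^ 2 : ℝ) : ℂ) := by
      rw [hH]
      simp only [Complex.mul_conj, Complex.normSq_eq_norm_sq]
      push_cast
      rfl
    have hreal : (∑ c, ‖h c‖ ^ 2) * (∑ b, ‖g b‖ ^ 2) * (∑ a, ‖f a‖ ^ 2) = 1 := by
      rw [← hΨ]
      have hnp : ∀ t : Fin dA × Fin dB × Fin dC,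
          ‖Ψ t‖ ^ 2 = ‖f t.1‖ ^ 2 * ‖g t.2.1‖ ^ 2 * ‖h t.2.2‖ ^ 2 := by
        intro t
        have : Ψ t = f t.1 * g t.2.1 * h t.2.2 := hp t.1 t.2.1 t.2.2
        rw [this, norm_mul, norm_mul, mul_pow, mul_pow]
      simp only [hnp]
      rw [show (∑ t : Fin dA × Fin dB × Fin dC, ‖f t.1‖ ^ 2 * ‖g t.2.1‖ ^ 2 * ‖h t.2.2‖ ^ 2)
          = ∑ a, ∑ b, ∑ c, ‖f a‖ ^ 2 * ‖g b‖ ^ 2 * ‖h c‖ ^ 2 from by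
        simp only [Fintype.sum_prod_type]]
      rw [sum3]
      exact Finset.sum_congr rfl fun a _ => Finset.sum_congr rfl fun b _ =>
        Finset.sum_congr rfl fun c _ => by ring
    have hGHF : G * H * F = 1 := by
      rw [hcastF, hcastG, hcastH]
      rw [show ((∑ b, ‖g b‖ ^ 2 : ℝ) : ℂ) * ((∑ c, ‖h c‖ ^ 2 : ℝ) : ℂ) * ((∑ a, ‖f a‖ ^ 2 : ℝ) : ℂ)
          = (((∑ c, ‖h c‖ ^ 2) * (∑ b, ‖g b‖ ^ 2) * (∑ a, ‖f a‖ ^ 2) : ℝ) : ℂ) from by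
        push_cast; ring]
      rw [hreal]
      norm_num
    rw [hGHF]
    norm_num

end
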